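/- Let f be a piecewise contracting interval map on X with attractor Λ. Then for every x ∈ Λ there exists a decreasing sequence {B_k}_{k≥1} of atoms (i.e. B_k ⊃ B_{k+1} for all k ≥ 1) such that x ∈ B_k ∈ 𝒜_k for all k ≥ 1 and ∩_{k≥1} B_k = {x}. -/
import Mathlib


open Set Filter Metric Topology

/-- A piecewise contracting interval map (PCIM) on the compact interval `X = [a,b]`:
there are `N ≥ 1` pairwise disjoint nonempty open (relative to `X`) subintervals
whose closures cover `X`, and `f` contracts with rate `lam ∈ (0,1)` on each piece. -/
structure PCIM where
  a : ℝ
  b : ℝ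
  hab : a < b
  N : ℕ
  hN : 1 ≤ N
  f : ℝ → ℝ
  lam : ℝ
  hlam₀ : 0 < lam
  hlam₁ : lam < 1
  piece : Fin N → Set ℝ
  piece_nonempty : ∀ i, (piece i).Nonempty
  piece_interval : ∀ i, ∃ c d : ℝ, piece i = Set.Ioo c d ∩ Set.Icc a b
  piece_disjoint : ∀ i j, i ≠ j → Disjoint (piece i) (piece j)
  cover : Set.Icc a b = ⋃ i, closure (piece i)
  mapsTo : Set.MapsTo f (Set.Icc a b) (Set.Icc a b)
  contract : ∀ i, ∀ x ∈ piece i, ∀ y ∈ piece i, |f x - f y| ≤ lam * |x - y|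

namespace PCIM

variable (P : PCIM)

/-- The underlying compact interval `X`. -/
def X : Set ℝ := Set.Icc P.a P.b

/-- `X* = ⋃ i, X_i`, the union of the contraction pieces. -/
def Xstar : Set ℝ := ⋃ i, P.piece i

/-- `Δ = X \ X*`, the set of boundaries of the contraction pieces. -/
def Delta : Set ℝ := P.X \ P.Xstar

/-- `X̃ = ⋂_{j ≥ 0} f⁻ʲ(X*)`, the points all of whose iterates are well defined. -/
def Xtilde : Set ℝ := ⋂ j : ℕ, (P.f^[j]) ⁻¹' P.Xstar

/-- `D`: the set of one-sided limits of `f` at the points of `Δ`. -/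
def D : Set ℝ :=
  {L | ∃ c ∈ P.Delta,
    ((𝓝[P.X ∩ Set.Iio c] c).NeBot ∧ Filter.Tendsto P.f (𝓝[P.X ∩ Set.Iio c] c) (𝓝 L)) ∨
    ((𝓝[P.X ∩ Set.Ioi c] c).NeBot ∧ Filter.Tendsto P.f (𝓝[P.X ∩ Set.Ioi c] c) (𝓝 L))}

/-- A set `A` is `f`-pseudo-invariant if for every `x ∈ A` at least one of the
one-sided limits of `f` at `x` belongs to `A`. -/
def PseudoInvariant (A : Set ℝ) : Prop :=
  ∀ x ∈ A,
    (∃ L ∈ A, (𝓝[P.X ∩ Set.Iio x] x).NeBot ∧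
      Filter.Tendsto P.f (𝓝[P.X ∩ Set.Iio x] x) (𝓝 L)) ∨
    (∃ L ∈ A, (𝓝[P.X ∩ Set.Ioi x] x).NeBot ∧
      Filter.Tendsto P.f (𝓝[P.X ∩ Set.Ioi x] x) (𝓝 L))

/-- `f` is piecewise monotonic: strictly monotone on each contraction piece. -/
def PiecewiseMonotonic : Prop :=
  ∀ i, StrictMonoOn P.f (P.piece i) ∨ StrictAntiOn P.f (P.piece i)

/-- `f` satisfies the separation property: it is piecewise monotonic and the closures
of the images of distinct pieces are disjoint. -/
def SeparationProperty : Prop :=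
  P.PiecewiseMonotonic ∧
    ∀ i j, i ≠ j → closure (P.f '' P.piece i) ∩ closure (P.f '' P.piece j) = ∅

/-- The iterates `Λ_n` defining the attractor: `Λ_0 = X`,
`Λ_{n+1} = cl (f (Λ_n \ Δ))`. -/
def LambdaIter : (P : PCIM) → ℕ → Set ℝ
  | Q, 0 => Q.X
  | Q, n + 1 => closure (Q.f '' (LambdaIter Q n \ Q.Delta))

/-- The attractor `Λ = ⋂_{n ≥ 1} Λ_n`. -/
def Lambda : Set ℝ := ⋂ n : ℕ, P.LambdaIter (n + 1)

/-- The atom associated to the word `w = [i₁, …, iₙ]`: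
`A_{i₁…iₙ} = F_{iₙ} ∘ ⋯ ∘ F_{i₁}(X)` where `F_i(A) = cl (f (A ∩ X_i))`. -/
def atomOf (w : List (Fin P.N)) : Set ℝ :=
  w.foldl (fun A i => closure (P.f '' (A ∩ P.piece i))) P.X

/-- `𝒜_n`: the set of (nonempty) atoms of generation `n`. -/
def atoms (n : ℕ) : Set (Set ℝ) :=
  {A | ∃ w : List (Fin P.N), w.length = n ∧ P.atomOf w = A ∧ A.Nonempty}

/-- `θ` is the itinerary of `x`: `f^t(x) ∈ X_{θ_t}` for all `t`. -/
def IsItinerary (x : ℝ) (θ : ℕ → Fin P.N) : Prop :=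
  ∀ t : ℕ, P.f^[t] x ∈ P.piece (θ t)

/-- The word `θ_t θ_{t+1} … θ_{t+n-1}` of length `n` of the sequence `θ`. -/
def word (θ : ℕ → Fin P.N) (t n : ℕ) : List (Fin P.N) :=
  (List.range n).map fun k => θ (t + k)

/-- `L_n(θ)`: the set of words of length `n` occurring in `θ`. -/
def lang (θ : ℕ → Fin P.N) (n : ℕ) : Set (List (Fin P.N)) :=
  {w | ∃ t : ℕ, w = P.word θ t n}

/-- The complexity function `p_θ(n) = #L_n(θ)`. -/
noncomputable def complexity (θ : ℕ → Fin P.N) (n : ℕ) : ℕ := (P.lang θ n).ncard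

/-- The forward orbit of `x` under `f`. -/
def orbit (x : ℝ) : Set ℝ := {y | ∃ k : ℕ, P.f^[k] x = y}

/-- The ω-limit set of `x` under `f`. -/
def omegaLimitSet (x : ℝ) : Set ℝ :=
  ⋂ n : ℕ, closure {y | ∃ m : ℕ, n ≤ m ∧ P.f^[m] x = y}

/-- A compact pseudo-invariant set `A` is `X̃`-minimal if the orbit of every point
of `A ∩ X̃` is dense in `A`. -/
def XtildeMinimal (A : Set ℝ) : Prop :=
  IsCompact A ∧ P.PseudoInvariant A ∧ ∀ x ∈ A ∩ P.Xtilde, A ⊆ closure (P.orbit x)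

/-- A periodic orbit contained in `X̃`. -/
def IsPeriodicOrbit (A : Set ℝ) : Prop :=
  ∃ x ∈ P.Xtilde, ∃ p : ℕ, 1 ≤ p ∧ P.f^[p] x = x ∧ A = P.orbit x

end PCIM

/-- A Cantor set: nonempty, compact, perfect and totally disconnected. -/
def IsCantorSet (A : Set ℝ) : Prop :=
  A.Nonempty ∧ IsCompact A ∧ Perfect A ∧ IsTotallyDisconnected A



/-! ### Auxiliary lemmas for STATEMENT 12 -/

namespace PCIMAux

variable (P : PCIM)

/-- The atom-step map `F_i`. -/
def step (A : Set ℝ) (i : Fin P.N) : Set ℝ := closure (P.f '' (A ∩ P.piece i))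

lemma atomOf_eq (w : List (Fin P.N)) : P.atomOf w = w.foldl (step P) P.X := rfl

lemma piece_sub_X (i : Fin P.N) : P.piece i ⊆ P.X := by
  obtain ⟨c, d, h⟩ := P.piece_interval i
  rw [h]; exact Set.inter_subset_right

lemma isClosed_X : IsClosed P.X := isClosed_Icc

lemma step_sub_X (A : Set ℝ) (i : Fin P.N) : step P A i ⊆ P.X := by
  apply closure_minimal _ (isClosed_X P)
  rintro _ ⟨y, ⟨-, hy⟩, rfl⟩
  exact P.mapsTo (piece_sub_X P i hy)

lemma fold_sub_X : ∀ (w : List (Fin P.N)) (A : Set ℝ), A ⊆ P.X →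
    w.foldl (step P) A ⊆ P.X
  | [], _, h => h
  | i :: w, A, _ => fold_sub_X w _ (step_sub_X P A i)

lemma atom_sub_X (w : List (Fin P.N)) : P.atomOf w ⊆ P.X := by
  rw [atomOf_eq]; exact fold_sub_X P w P.X subset_rfl

lemma step_mono {A B : Set ℝ} (h : A ⊆ B) (i : Fin P.N) : step P A i ⊆ step P B i :=
  closure_mono (Set.image_mono (Set.inter_subset_inter_left _ h))

lemma fold_mono : ∀ (w : List (Fin P.N)) {A B : Set ℝ}, A ⊆ B →
    w.foldl (step P) A ⊆ w.foldl (step P) B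
  | [], _, _, h => h
  | i :: w, _, _, h => fold_mono w (step_mono P h i)

lemma atom_append_sub (u w : List (Fin P.N)) : P.atomOf (u ++ w) ⊆ P.atomOf w := by
  rw [atomOf_eq, atomOf_eq, List.foldl_append]
  exact fold_mono P w (fold_sub_X P u P.X subset_rfl)

lemma bounded_X : Bornology.IsBounded P.X := isBounded_Icc P.a P.b

lemma diam_step {A : Set ℝ} (hA : A ⊆ P.X) (i : Fin P.N) :
    Metric.diam (step P A i) ≤ P.lam * Metric.diam A := by
  rw [step, Metric.diam_closure]
  apply Metric.diam_le_of_forall_dist_le (mul_nonneg P.hlam₀.le Metric.diam_nonneg)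
  rintro _ ⟨y, ⟨hyA, hyp⟩, rfl⟩ _ ⟨z, ⟨hzA, hzp⟩, rfl⟩
  calc dist (P.f y) (P.f z) = |P.f y - P.f z| := Real.dist_eq _ _
    _ ≤ P.lam * |y - z| := P.contract i y hyp z hzp
    _ = P.lam * dist y z := by rw [Real.dist_eq]
    _ ≤ P.lam * Metric.diam A := by
        exact mul_le_mul_of_nonneg_left
          (Metric.dist_le_diam_of_mem ((bounded_X P).subset hA) hyA hzA) P.hlam₀.le

lemma diam_fold : ∀ (w : List (Fin P.N)) (A : Set ℝ), A ⊆ P.X →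
    Metric.diam (w.foldl (step P) A) ≤ P.lam ^ w.length * Metric.diam A
  | [], A, _ => by simp
  | i :: w, A, hA => by
      calc Metric.diam ((i :: w).foldl (step P) A)
          = Metric.diam (w.foldl (step P) (step P A i)) := rfl
        _ ≤ P.lam ^ w.length * Metric.diam (step P A i) :=
            diam_fold w _ (step_sub_X P A i)
        _ ≤ P.lam ^ w.length * (P.lam * Metric.diam A) := by
            exact mul_le_mul_of_nonneg_left (diam_step P hA i) (pow_nonneg P.hlam₀.le _)
        _ = P.lam ^ (i :: w).length * Metric.diam A := by
            rw [List.length_cons, pow_succ]; ring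

lemma diam_atom (w : List (Fin P.N)) :
    Metric.diam (P.atomOf w) ≤ P.lam ^ w.length * (P.b - P.a) := by
  rw [atomOf_eq]
  calc Metric.diam (w.foldl (step P) P.X) ≤ P.lam ^ w.length * Metric.diam P.X :=
        diam_fold P w P.X subset_rfl
    _ = P.lam ^ w.length * (P.b - P.a) := by
        rw [PCIM.X, Real.diam_Icc P.hab.le]

lemma lambdaIter_sub_X : ∀ n, P.LambdaIter n ⊆ P.X
  | 0 => subset_rfl
  | n + 1 => by
      show closure (P.f '' (P.LambdaIter n \ P.Delta)) ⊆ P.X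
      apply closure_minimal _ (isClosed_X P)
      rintro _ ⟨y, ⟨hy, -⟩, rfl⟩
      exact P.mapsTo (lambdaIter_sub_X n hy)

lemma atom_concat (w : List (Fin P.N)) (i : Fin P.N) :
    P.atomOf (w ++ [i]) = step P (P.atomOf w) i := by
  rw [atomOf_eq, atomOf_eq, List.foldl_append]; rfl

/-- Atoms of generation `n` cover `Λ_n`. -/
lemma mem_lambdaIter : ∀ n, ∀ x ∈ P.LambdaIter n,
    ∃ w : List (Fin P.N), w.length = n ∧ x ∈ P.atomOf w
  | 0, x, hx => ⟨[], rfl, hx⟩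
  | n + 1, x, hx => by
      have hx' : x ∈ closure (P.f '' (P.LambdaIter n \ P.Delta)) := hx
      set U : Set ℝ := ⋃ (v : List.Vector (Fin P.N) n) (i : Fin P.N),
        P.atomOf (v.1 ++ [i]) with hU
      have hUclosed : IsClosed U := by
        apply isClosed_iUnion_of_finite
        intro v
        apply isClosed_iUnion_of_finite
        intro i
        rw [atom_concat]
        exact isClosed_closure
      have hsub : P.f '' (P.LambdaIter n \ P.Delta) ⊆ U := by
        rintro _ ⟨y, ⟨hy, hyd⟩, rfl⟩
        obtain ⟨w, hwl, hwy⟩ := mem_lambdaIter n y hy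
        have hyX : y ∈ P.X := lambdaIter_sub_X P n hy
        have hyXs : y ∈ P.Xstar := by
          by_contra hc
          exact hyd ⟨hyX, hc⟩
        obtain ⟨i, hi⟩ := Set.mem_iUnion.mp hyXs
        refine Set.mem_iUnion.mpr ⟨⟨w, hwl⟩, Set.mem_iUnion.mpr ⟨i, ?_⟩⟩
        rw [atom_concat]
        exact subset_closure ⟨y, ⟨hwy, hi⟩, rfl⟩
      obtain ⟨v, hv⟩ := Set.mem_iUnion.mp (closure_minimal hsub hUclosed hx')
      obtain ⟨i, hi⟩ := Set.mem_iUnion.mp hv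
      exact ⟨v.1 ++ [i], by simp [v.2], hi⟩

variable {P}

/-- `x` lies in arbitrarily long leftward extensions of the word `w`. -/
def Good (x : ℝ) (w : List (Fin P.N)) : Prop :=
  ∀ n, ∃ u : List (Fin P.N), u.length = n ∧ x ∈ P.atomOf (u ++ w)

lemma good_drop {x : ℝ} {w : List (Fin P.N)} {m m' : ℕ} (h : m' ≤ m)
    (hu : ∃ u : List (Fin P.N), u.length = m ∧ x ∈ P.atomOf (u ++ w)) :
    ∃ u : List (Fin P.N), u.length = m' ∧ x ∈ P.atomOf (u ++ w) := by
  obtain ⟨u, hl, hx⟩ := hu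
  refine ⟨u.drop (m - m'), by rw [List.length_drop, hl]; omega, ?_⟩
  have hsub : P.atomOf (u ++ w) ⊆ P.atomOf (u.drop (m - m') ++ w) := by
    conv_lhs => rw [← List.take_append_drop (m - m') u]
    rw [List.append_assoc]
    exact atom_append_sub P _ _
  exact hsub hx

lemma good_ext {x : ℝ} {w : List (Fin P.N)} (hg : Good x w) :
    ∃ i : Fin P.N, Good x (i :: w) := by
  by_contra h
  push_neg at h
  have h' : ∀ i : Fin P.N, ∃ n, ¬ ∃ u : List (Fin P.N),
      u.length = n ∧ x ∈ P.atomOf (u ++ (i :: w)) := fun i => not_forall.mp (h i)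
  choose nn hn using h'
  set m := Finset.univ.sup nn with hm
  obtain ⟨u, hl, hx⟩ := hg (m + 1)
  rcases List.eq_nil_or_concat u with rfl | ⟨u', i₀, rfl⟩
  · simp at hl
  · have hl' : u'.length = m := by
      rw [List.concat_eq_append, List.length_append] at hl
      simpa using hl
    have hx' : x ∈ P.atomOf (u' ++ (i₀ :: w)) := by
      rw [List.concat_eq_append, List.append_assoc] at hx
      exact hx
    exact hn i₀ (good_drop (Finset.le_sup (Finset.mem_univ i₀)) ⟨u', hl', hx'⟩)

lemma mem_of_good {x : ℝ} {w : List (Fin P.N)} (hg : Good x w) : x ∈ P.atomOf w := by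
  obtain ⟨u, hl, hx⟩ := hg 0
  rw [List.length_eq_zero_iff] at hl
  subst hl
  simpa using hx

/-- König's-lemma style nested sequence of good words. -/
noncomputable def goodSeq {x : ℝ} (h0 : Good x ([] : List (Fin P.N))) :
    ∀ _ : ℕ, {w : List (Fin P.N) // Good x w}
  | 0 => ⟨[], h0⟩
  | k + 1 => ⟨(good_ext (goodSeq h0 k).2).choose :: (goodSeq h0 k).1,
      (good_ext (goodSeq h0 k).2).choose_spec⟩

lemma goodSeq_length {x : ℝ} (h0 : Good x ([] : List (Fin P.N))) :
    ∀ k, (goodSeq h0 k).1.length = k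
  | 0 => rfl
  | k + 1 => by
      show ((good_ext (goodSeq h0 k).2).choose :: (goodSeq h0 k).1).length = k + 1
      rw [List.length_cons, goodSeq_length h0 k]

end PCIMAux


/-- Every point `x` of the attractor `Λ` lies in a decreasing
sequence of atoms `B_k ∈ 𝒜_k` (for `k ≥ 1`) whose intersection is `{x}`. -/
theorem exists_decreasing_atoms (P : PCIM) :
    ∀ x ∈ P.Lambda, ∃ B : ℕ → Set ℝ,
      (∀ k : ℕ, 1 ≤ k → x ∈ B k ∧ B k ∈ P.atoms k) ∧
      (∀ k : ℕ, 1 ≤ k → B (k + 1) ⊆ B k) ∧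
      (⋂ k : ℕ, ⋂ (_ : 1 ≤ k), B k) = {x} := by
  intro x hx
  have hxL : ∀ n : ℕ, x ∈ P.LambdaIter (n + 1) := fun n => Set.mem_iInter.mp hx n
  have hL : ∀ n : ℕ, x ∈ P.LambdaIter n := by
    intro n
    cases n with
    | zero => exact PCIMAux.lambdaIter_sub_X P 1 (hxL 0)
    | succ n => exact hxL n
  have h0 : PCIMAux.Good x ([] : List (Fin P.N)) := by
    intro n
    obtain ⟨w, hwl, hwx⟩ := PCIMAux.mem_lambdaIter P n x (hL n)
    exact ⟨w, hwl, by simpa using hwx⟩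
  refine ⟨fun k => P.atomOf (PCIMAux.goodSeq h0 k).1, ?_, ?_, ?_⟩
  · intro k _
    have hxk : x ∈ P.atomOf (PCIMAux.goodSeq h0 k).1 :=
      PCIMAux.mem_of_good (PCIMAux.goodSeq h0 k).2
    exact ⟨hxk, ⟨(PCIMAux.goodSeq h0 k).1, PCIMAux.goodSeq_length h0 k, rfl, ⟨x, hxk⟩⟩⟩
  · intro k _
    show P.atomOf (PCIMAux.goodSeq h0 (k + 1)).1 ⊆ P.atomOf (PCIMAux.goodSeq h0 k).1
    have : (PCIMAux.goodSeq h0 (k + 1)).1 =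
        [(PCIMAux.good_ext (PCIMAux.goodSeq h0 k).2).choose] ++ (PCIMAux.goodSeq h0 k).1 := rfl
    rw [this]
    exact PCIMAux.atom_append_sub P _ _
  · apply Set.eq_singleton_iff_unique_mem.mpr
    constructor
    · exact Set.mem_iInter.mpr fun k => Set.mem_iInter.mpr fun _ =>
        PCIMAux.mem_of_good (PCIMAux.goodSeq h0 k).2
    · intro y hy
      have hyk : ∀ k : ℕ, 1 ≤ k → y ∈ P.atomOf (PCIMAux.goodSeq h0 k).1 := fun k hk =>
        Set.mem_iInter.mp (Set.mem_iInter.mp hy k) hk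
      have hdist : ∀ k : ℕ, 1 ≤ k → dist y x ≤ P.lam ^ k * (P.b - P.a) := by
        intro k hk
        have hb : Bornology.IsBounded (P.atomOf (PCIMAux.goodSeq h0 k).1) :=
          (PCIMAux.bounded_X P).subset (PCIMAux.atom_sub_X P _)
        calc dist y x ≤ Metric.diam (P.atomOf (PCIMAux.goodSeq h0 k).1) :=
              Metric.dist_le_diam_of_mem hb (hyk k hk)
                (PCIMAux.mem_of_good (PCIMAux.goodSeq h0 k).2)
          _ ≤ P.lam ^ (PCIMAux.goodSeq h0 k).1.length * (P.b - P.a) :=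
              PCIMAux.diam_atom P _
          _ = P.lam ^ k * (P.b - P.a) := by rw [PCIMAux.goodSeq_length h0 k]
      have htend : Filter.Tendsto (fun k : ℕ => P.lam ^ k * (P.b - P.a)) Filter.atTop (𝓝 0) := by
        have := (tendsto_pow_atTop_nhds_zero_of_lt_one P.hlam₀.le P.hlam₁).mul_const (P.b - P.a)
        simpa using this
      have hle : dist y x ≤ 0 :=
        ge_of_tendsto htend (Filter.eventually_atTop.mpr ⟨1, fun k hk => hdist k hk⟩)
      have : dist y x = 0 := le_antisymm hle dist_nonneg
      exact dist_eq_zero.mp this
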